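/- Let C be a fusion category and FPdim: K(C) → ℝ the unique ring homomorphism on the Grothendieck ring that is positive on all objects. If X is an object with FPdim(X) = 1 and Y is any simple object, then X ⊗ Y is simple. (In the language of the paper: an irreducible module of quantum dimension 1 is a simple current, and tensoring with it permutes the simple objects.) -/
import Mathlib


/-- Fusion-ring form of the simple current property: in a fusion category (encoded by
its fusion coefficients `N`, unit `e`, duality `star`, and Frobenius–Perron dimensions
`d`, which form a ring homomorphism and are `≥ 1` on simple objects), if `d x = 1`
then `X ⊗ Y` is simple for every simple `Y`. -/
theorem stmt8 {ι : Type*} [Fintype ι] [DecidableEq ι] (e : ι)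
    (N : ι → ι → ι → ℕ) (d : ι → ℝ)
    (hunit_l : ∀ i k, N e i k = if k = i then 1 else 0)
    (hunit_r : ∀ i k, N i e k = if k = i then 1 else 0)
    (hassoc : ∀ i j k l, ∑ m, N i j m * N m k l = ∑ m, N j k m * N i m l)
    (star : ι → ι) (hdual : ∀ i j, N i j e = if j = star i then 1 else 0)
    (hd1 : ∀ i, 1 ≤ d i)
    (hhom : ∀ i j, d i * d j = ∑ k, (N i j k : ℝ) * d k)
    (x : ι) (hx : d x = 1) (y : ι) :
    ∃ z : ι, ∀ k, N x y k = if k = z then 1 else 0 := by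
  have hdpos : ∀ i, (0:ℝ) < d i := fun i => lt_of_lt_of_le one_pos (hd1 i)
  -- key identity: d j = ∑ k, N x j k * d k
  have hkey : ∀ j, d j = ∑ k, (N x j k : ℝ) * d k := by
    intro j
    have h := hhom x j
    rwa [hx, one_mul] at h
  -- every column of the matrix (j, k) ↦ N x j k is nonzero
  have hcol : ∀ k, 1 ≤ ∑ j, N x j k := by
    intro k
    rw [Nat.one_le_iff_ne_zero]
    intro h0
    have hall : ∀ j, N x j k = 0 := fun j =>
      Finset.sum_eq_zero_iff.mp h0 j (Finset.mem_univ j)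
    have h := hassoc x (star x) k k
    have hL : 1 ≤ ∑ m, N x (star x) m * N m k k := by
      have h1 : N x (star x) e * N e k k = 1 := by simp [hdual, hunit_l]
      calc (1:ℕ) = N x (star x) e * N e k k := h1.symm
        _ ≤ ∑ m, N x (star x) m * N m k k :=
            Finset.single_le_sum (f := fun m => N x (star x) m * N m k k)
              (fun _ _ => Nat.zero_le _) (Finset.mem_univ e)
    rw [h] at hL
    simp [hall] at hL
  -- comparing dimensions forces every column sum to be exactly 1
  have hsum : ∑ k, ((∑ j, N x j k : ℕ) : ℝ) * d k = ∑ k, d k := by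
    calc ∑ k, ((∑ j, N x j k : ℕ) : ℝ) * d k
        = ∑ k, ∑ j, (N x j k : ℝ) * d k := by
          refine Finset.sum_congr rfl fun k _ => ?_
          push_cast
          rw [Finset.sum_mul]
      _ = ∑ j, ∑ k, (N x j k : ℝ) * d k := Finset.sum_comm
      _ = ∑ j, d j := Finset.sum_congr rfl fun j _ => (hkey j).symm
  have hle : ∀ k ∈ Finset.univ, d k ≤ ((∑ j, N x j k : ℕ) : ℝ) * d k := by
    intro k _
    have : (1:ℝ) ≤ ((∑ j, N x j k : ℕ) : ℝ) := by exact_mod_cast hcol k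
    nlinarith [hdpos k]
  have hcol1 : ∀ k, (∑ j, N x j k) = 1 := by
    intro k
    have heq := (Finset.sum_eq_sum_iff_of_le hle).mp hsum.symm k (Finset.mem_univ k)
    have h2 : ((∑ j, N x j k : ℕ) : ℝ) * d k = 1 * d k := by rw [one_mul]; exact heq.symm
    have h3 : ((∑ j, N x j k : ℕ) : ℝ) = 1 := mul_right_cancel₀ (hdpos k).ne' h2
    exact_mod_cast h3
  -- every row sum is ≥ 1
  have hrow : ∀ j, 1 ≤ ∑ k, N x j k := by
    intro j
    rw [Nat.one_le_iff_ne_zero]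
    intro h0
    have hall : ∀ k, N x j k = 0 := fun k =>
      Finset.sum_eq_zero_iff.mp h0 k (Finset.mem_univ k)
    have := hkey j
    simp [hall] at this
    exact (hdpos j).ne' this
  -- total count is card ι, so every row sum is exactly 1
  have htot : ∑ j, ∑ k, N x j k = ∑ j : ι, 1 := by
    rw [Finset.sum_comm]
    simp [hcol1]
  have hrow1 : ∑ k, N x y k = 1 := by
    have := (Finset.sum_eq_sum_iff_of_le
      (fun j (_ : j ∈ Finset.univ) => hrow j)).mp htot.symm y (Finset.mem_univ y)
    exact this.symm
  -- extract the unique z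
  obtain ⟨z, hz⟩ : ∃ z, N x y z ≠ 0 := by
    by_contra h
    push_neg at h
    simp [h] at hrow1
  refine ⟨z, fun k => ?_⟩
  by_cases hk : k = z
  · subst hk
    have h1 : N x y k ≤ ∑ i, N x y i :=
      Finset.single_le_sum (f := fun i => N x y i) (fun _ _ => Nat.zero_le _)
        (Finset.mem_univ k)
    rw [hrow1] at h1
    rw [if_pos rfl]
    omega
  · have hpair : N x y z + N x y k ≤ 1 := by
      rw [← hrow1]
      have : ({z, k} : Finset ι) ⊆ Finset.univ := Finset.subset_univ _
      calc N x y z + N x y k = ∑ i ∈ ({z, k} : Finset ι), N x y i := by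
            rw [Finset.sum_pair (Ne.symm hk)]
        _ ≤ ∑ i, N x y i := Finset.sum_le_sum_of_subset this
    simp only [if_neg hk]
    omega
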